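/- Let B be an n×n complex matrix satisfying B·Bᴴ + Bᴴ·B = I_n. Let |B| denote the positive semidefinite square root of Bᴴ·B and |Bᴴ| the positive semidefinite square root of B·Bᴴ. Then there exist a unitary n×n matrix V and a function λ : Fin n → ℝ with 0 ≤ λ(j) ≤ 1 for all j, such that Vᴴ·|B|·V is the diagonal matrix with entries λ(j) and Vᴴ·|Bᴴ|·V is the diagonal matrix with entries √(1 − λ(j)²). -/

import Mathlib

open Matrix
open scoped ComplexOrder

/-- The square root of a positive semidefinite matrix, as defined in Mathlib (Dec 2024). -/
noncomputable def Matrix.PosSemidef.sqrt {n 𝕜 : Type*} [Fintype n] [DecidableEq n] [RCLike 𝕜]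
    {A : Matrix n n 𝕜} (hA : A.PosSemidef) : Matrix n n 𝕜 :=
  hA.1.eigenvectorUnitary.1 * diagonal ((↑) ∘ (√·) ∘ hA.1.eigenvalues) *
    (star hA.1.eigenvectorUnitary : Matrix n n 𝕜)

namespace Matrix.PosSemidef

lemma posSemidef_sqrt {m 𝕜 : Type*} [Fintype m] [DecidableEq m] [RCLike 𝕜] {A : Matrix m m 𝕜}
    (hA : A.PosSemidef) : hA.sqrt.PosSemidef := by
  unfold Matrix.PosSemidef.sqrt
  have : (star hA.1.eigenvectorUnitary : Matrix m m 𝕜) =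
      (hA.1.eigenvectorUnitary : Matrix m m 𝕜)ᴴ := rfl
  rw [this]
  apply PosSemidef.mul_mul_conjTranspose_same
  refine posSemidef_diagonal_iff.mpr fun i ↦ ?_
  simp only [Function.comp_apply]
  exact RCLike.ofReal_nonneg.mpr (Real.sqrt_nonneg _)

lemma sq_sqrt {m 𝕜 : Type*} [Fintype m] [DecidableEq m] [RCLike 𝕜] {A : Matrix m m 𝕜}
    (hA : A.PosSemidef) : hA.sqrt ^ 2 = A := by
  let C : Matrix m m 𝕜 := hA.1.eigenvectorUnitary
  let E := diagonal ((↑) ∘ Real.sqrt ∘ hA.1.eigenvalues : m → 𝕜)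
  suffices C * (E * (star C * C) * E) * star C = A by
    rw [Matrix.PosSemidef.sqrt, pow_two]
    simpa only [← mul_assoc] using this
  have : star C * C = 1 := Unitary.coe_star_mul_self hA.1.eigenvectorUnitary
  rw [this, mul_one]
  have : E * E = diagonal ((↑) ∘ hA.1.eigenvalues) := by
    rw [diagonal_mul_diagonal]
    congr! with v
    simp [← pow_two, ← RCLike.ofReal_pow, Real.sq_sqrt (hA.eigenvalues_nonneg v)]
  rw [this]
  conv_rhs => rw [hA.1.spectral_theorem]
  rfl

lemma eq_of_sq_eq_sq' {m 𝕜 : Type*} [Fintype m] [DecidableEq m] [RCLike 𝕜] {A : Matrix m m 𝕜}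
    (hA : A.PosSemidef) {B : Matrix m m 𝕜} (hB : PosSemidef B) (hAB : A ^ 2 = B ^ 2) :
    A = B := by
  by_contra h_ne
  let ⟨v, t, ht, hv, hv'⟩ := (hA.1.sub hB.1).exists_eigenvector_of_ne_zero (sub_ne_zero.mpr h_ne)
  have h_sum : 0 = t * (star v ⬝ᵥ A *ᵥ v + star v ⬝ᵥ B *ᵥ v) := calc
    0 = star v ⬝ᵥ (A ^ 2 - B ^ 2) *ᵥ v := by rw [hAB, sub_self, zero_mulVec, dotProduct_zero]
    _ = star v ⬝ᵥ A *ᵥ (A - B) *ᵥ v + star v ⬝ᵥ (A - B) *ᵥ B *ᵥ v := by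
      rw [mulVec_mulVec, mulVec_mulVec, ← dotProduct_add, ← add_mulVec, mul_sub, sub_mul,
        add_sub, sub_add_cancel, pow_two, pow_two]
    _ = t * (star v ⬝ᵥ A *ᵥ v) + (star v) ᵥ* (A - B)ᴴ ⬝ᵥ B *ᵥ v := by
      rw [hv', mulVec_smul, dotProduct_smul, RCLike.real_smul_eq_coe_mul,
        dotProduct_mulVec _ (A - B), hA.1.sub hB.1]
    _ = t * (star v ⬝ᵥ A *ᵥ v + star v ⬝ᵥ B *ᵥ v) := by
      simp_rw [← star_mulVec, hv', mul_add, ← RCLike.real_smul_eq_coe_mul, ← smul_dotProduct]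
      congr 2 with i
      simp only [Pi.star_apply, Pi.smul_apply, RCLike.real_smul_eq_coe_mul, star_mul',
        RCLike.star_def, RCLike.conj_ofReal]
  replace h_sum : star v ⬝ᵥ A *ᵥ v + star v ⬝ᵥ B *ᵥ v = 0 := by
    rw [eq_comm, ← mul_zero (t : 𝕜)] at h_sum
    exact mul_left_cancel₀ (RCLike.ofReal_ne_zero.mpr ht) h_sum
  have h_van : star v ⬝ᵥ A *ᵥ v = 0 ∧ star v ⬝ᵥ B *ᵥ v = 0 := by
    refine ⟨le_antisymm ?_ (hA.dotProduct_mulVec_nonneg v),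
      le_antisymm ?_ (hB.dotProduct_mulVec_nonneg v)⟩
    · rw [add_comm, add_eq_zero_iff_eq_neg] at h_sum
      simpa only [h_sum, neg_nonneg] using hB.dotProduct_mulVec_nonneg v
    · simpa only [add_eq_zero_iff_eq_neg.mp h_sum, neg_nonneg] using hA.dotProduct_mulVec_nonneg v
  have aux : star v ⬝ᵥ (A - B) *ᵥ v = 0 := by
    rw [sub_mulVec, dotProduct_sub, h_van.1, h_van.2, sub_zero]
  rw [hv', dotProduct_smul, RCLike.real_smul_eq_coe_mul, mul_eq_zero,
    RCLike.ofReal_eq_zero, dotProduct_star_self_eq_zero] at aux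
  rcases aux with h | h
  · exact ht h
  · exact hv h

lemma eq_sqrt_of_sq_eq {m 𝕜 : Type*} [Fintype m] [DecidableEq m] [RCLike 𝕜] {A : Matrix m m 𝕜}
    (hA : A.PosSemidef) {B : Matrix m m 𝕜} (hB : PosSemidef B) (hAB : A ^ 2 = B) :
    A = hB.sqrt :=
  eq_of_sq_eq_sq' hA hB.posSemidef_sqrt (by rw [hAB, hB.sq_sqrt])

end Matrix.PosSemidef

theorem simultaneous_diagonalization_of_abs {n : ℕ} (B : Matrix (Fin n) (Fin n) ℂ)
    (hB : B * Bᴴ + Bᴴ * B = 1) :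
    ∃ (V : Matrix (Fin n) (Fin n) ℂ) (lam : Fin n → ℝ),
      Vᴴ * V = 1 ∧ V * Vᴴ = 1 ∧
      (∀ j, 0 ≤ lam j ∧ lam j ≤ 1) ∧
      Vᴴ * (Matrix.posSemidef_conjTranspose_mul_self B).sqrt * V
        = Matrix.diagonal (fun j => ((lam j : ℝ) : ℂ)) ∧
      Vᴴ * (Matrix.posSemidef_self_mul_conjTranspose B).sqrt * V
        = Matrix.diagonal (fun j => ((Real.sqrt (1 - lam j ^ 2) : ℝ) : ℂ)) := by
  set S := (Matrix.posSemidef_conjTranspose_mul_self B).sqrt with hSdef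
  set T := (Matrix.posSemidef_self_mul_conjTranspose B).sqrt with hTdef
  have hS : S.PosSemidef := (Matrix.posSemidef_conjTranspose_mul_self B).posSemidef_sqrt
  have hT : T.PosSemidef := (Matrix.posSemidef_self_mul_conjTranspose B).posSemidef_sqrt
  have hS2 : S ^ 2 = Bᴴ * B := (Matrix.posSemidef_conjTranspose_mul_self B).sq_sqrt
  have hT2 : T ^ 2 = B * Bᴴ := (Matrix.posSemidef_self_mul_conjTranspose B).sq_sqrt
  have hHerm := hS.1
  set V := (hHerm.eigenvectorUnitary : Matrix (Fin n) (Fin n) ℂ) with hVdef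
  set μ := hHerm.eigenvalues with hμdef
  have hVsV : Vᴴ * V = 1 := by
    rw [← Matrix.star_eq_conjTranspose]
    exact Unitary.coe_star_mul_self hHerm.eigenvectorUnitary
  have hVVs : V * Vᴴ = 1 := by
    rw [← Matrix.star_eq_conjTranspose]
    exact Unitary.coe_mul_star_self hHerm.eigenvectorUnitary
  have hdiag : Vᴴ * S * V = Matrix.diagonal (fun j => ((μ j : ℝ) : ℂ)) := by
    rw [← Matrix.star_eq_conjTranspose]
    have := hHerm.conjStarAlgAut_star_eigenvectorUnitary
    rw [Unitary.conjStarAlgAut_apply, Unitary.coe_star, star_star] at this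
    exact this
  have hspec : S = V * Matrix.diagonal (fun j => ((μ j : ℝ) : ℂ)) * Vᴴ := by
    rw [← Matrix.star_eq_conjTranspose]
    exact hHerm.spectral_theorem
  have hμ0 : ∀ j, 0 ≤ μ j := hS.eigenvalues_nonneg
  have hSsq : S ^ 2 = V * Matrix.diagonal (fun j => ((μ j ^ 2 : ℝ) : ℂ)) * Vᴴ := by
    rw [pow_two]
    conv_lhs => rw [hspec]
    rw [show V * Matrix.diagonal (fun j => ((μ j : ℝ) : ℂ)) * Vᴴ *
        (V * Matrix.diagonal (fun j => ((μ j : ℝ) : ℂ)) * Vᴴ)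
      = V * (Matrix.diagonal (fun j => ((μ j : ℝ) : ℂ)) * ((Vᴴ * V) *
        Matrix.diagonal (fun j => ((μ j : ℝ) : ℂ)))) * Vᴴ by noncomm_ring, hVsV, one_mul,
      Matrix.diagonal_mul_diagonal]
    congr 2
    ext j
    push_cast
    ring
  have hTS : T ^ 2 = 1 - S ^ 2 := by
    rw [hT2, hS2, ← hB]; noncomm_ring
  have hTconj : Vᴴ * T ^ 2 * V = Matrix.diagonal (fun j => ((1 - μ j ^ 2 : ℝ) : ℂ)) := by
    rw [hTS, hSsq, mul_sub, sub_mul, mul_one, hVsV,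
      show Vᴴ * (V * Matrix.diagonal (fun j => ((μ j ^ 2 : ℝ) : ℂ)) * Vᴴ) * V
      = (Vᴴ * V) * Matrix.diagonal (fun j => ((μ j ^ 2 : ℝ) : ℂ)) * (Vᴴ * V) by noncomm_ring, hVsV,
      one_mul, mul_one, ← Matrix.diagonal_one, Matrix.diagonal_sub]
    ext j
    push_cast
    ring
  have hμle : ∀ j, μ j ^ 2 ≤ 1 := by
    intro j
    have hpsd : (Vᴴ * T ^ 2 * V).PosSemidef := by
      have := (hT.pow 2).conjTranspose_mul_mul_same V
      simpa [mul_assoc] using this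
    have h0 : (0 : ℂ) ≤ (Vᴴ * T ^ 2 * V) j j := by
      have h := hpsd.dotProduct_mulVec_nonneg (Pi.single j 1)
      simpa [dotProduct, Matrix.mulVec, Pi.single_apply, Finset.sum_ite_eq,
        Finset.sum_ite_eq'] using h
    rw [hTconj, Matrix.diagonal_apply_eq] at h0
    have := Complex.zero_le_real.mp h0
    linarith
  have hnonneg : ∀ j, 0 ≤ 1 - μ j ^ 2 := fun j => by linarith [hμle j]
  refine ⟨V, μ, hVsV, hVVs, fun j => ⟨hμ0 j, ?_⟩, hdiag, ?_⟩
  · nlinarith [hμle j, hμ0 j]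
  · set D := V * Matrix.diagonal (fun j => ((Real.sqrt (1 - μ j ^ 2) : ℝ) : ℂ)) * Vᴴ with hDdef
    have hDpsd : D.PosSemidef := by
      exact (Matrix.posSemidef_diagonal_iff.mpr fun i =>
        Complex.zero_le_real.mpr (Real.sqrt_nonneg _)).mul_mul_conjTranspose_same V
    have hDsq : D ^ 2 = B * Bᴴ := by
      rw [pow_two, hDdef,
        show V * Matrix.diagonal (fun j => ((Real.sqrt (1 - μ j ^ 2) : ℝ) : ℂ)) * Vᴴ *
          (V * Matrix.diagonal (fun j => ((Real.sqrt (1 - μ j ^ 2) : ℝ) : ℂ)) * Vᴴ)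
        = V * (Matrix.diagonal (fun j => ((Real.sqrt (1 - μ j ^ 2) : ℝ) : ℂ)) * ((Vᴴ * V) *
          Matrix.diagonal (fun j => ((Real.sqrt (1 - μ j ^ 2) : ℝ) : ℂ)))) * Vᴴ by noncomm_ring,
        hVsV, one_mul, Matrix.diagonal_mul_diagonal]
      have : (fun j => ((Real.sqrt (1 - μ j ^ 2) : ℝ) : ℂ) * ((Real.sqrt (1 - μ j ^ 2) : ℝ) : ℂ))
          = fun j => ((1 - μ j ^ 2 : ℝ) : ℂ) := by
        ext j
        rw [← Complex.ofReal_mul, Real.mul_self_sqrt (hnonneg j)]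
      rw [this]
      -- V * diagonal (1-μ²) * Vᴴ = 1 - S² = T² = B Bᴴ
      have h1 : V * Matrix.diagonal (fun j => ((1 - μ j ^ 2 : ℝ) : ℂ)) * Vᴴ
          = V * (Vᴴ * T ^ 2 * V) * Vᴴ := by rw [hTconj]
      rw [h1, show V * (Vᴴ * T ^ 2 * V) * Vᴴ = (V * Vᴴ) * T ^ 2 * (V * Vᴴ) by noncomm_ring, hVVs,
        one_mul, mul_one, hT2]
    have hDT : D = T := (hDpsd.eq_sqrt_of_sq_eq (Matrix.posSemidef_self_mul_conjTranspose B)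
      hDsq).symm ▸ rfl
    rw [← hDT, hDdef,
      show Vᴴ * (V * Matrix.diagonal (fun j => ((Real.sqrt (1 - μ j ^ 2) : ℝ) : ℂ)) * Vᴴ) * V
      = (Vᴴ * V) * Matrix.diagonal (fun j => ((Real.sqrt (1 - μ j ^ 2) : ℝ) : ℂ)) * (Vᴴ * V)
      by noncomm_ring, hVsV, one_mul, mul_one]
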